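/- Let X be a space and 𝒳 = {X_{M,α} : M ∈ ℳ, α < ω₁} a family of at most ω₁ many sets, each of cardinality ω₁, that is pairwise almost disjoint (distinct members meet in a countable set). Suppose for each M ∈ ℳ and α < ω₁, the set of complete accumulation points of X_{M,α} computed in M equals a fixed set H_M, and every subset of X_{M,α} of cardinality ω₁ has the same property regarding nonemptiness of complete accumulation points in M. Then there exist pairwise disjoint sets D_α ⊆ ⋃ℳ for α < ω₁ such that ⋃{H_M : M ∈ ℳ} ⊆ cl(D_α) for every α < ω₁. -/
import Mathlib


open Cardinal

universe u

/-- The set of complete accumulation points of a size-ω₁ set `S` computed in the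
subspace `M`. -/
def CAP {X : Type u} [TopologicalSpace X] (M S : Set X) : Set X :=
  {x ∈ M | ∀ U : Set X, IsOpen U → x ∈ U → ¬ (U ∩ S).Countable}

theorem disjoint_dense_sets_of_ad {X : Type u} [TopologicalSpace X]
    {μ : Type u} (hμ : #μ ≤ aleph 1)
    {ι : Type u} (hι : #ι = aleph 1)
    (M : μ → Set X) (H : μ → Set X) (F : μ → ι → Set X)
    (hsub : ∀ m α, F m α ⊆ M m)
    (hcard : ∀ m α, #↥(F m α) = aleph 1)
    (hdisj : ∀ m, Pairwise (Function.onFun Disjoint (F m)))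
    (had : ∀ m α n β, (m, α) ≠ (n, β) → (F m α ∩ F n β).Countable)
    (hcap : ∀ m α, CAP (M m) (F m α) = H m)
    (happ : ∀ m α, ∀ Y ⊆ F m α, #↥Y = aleph 1 → (CAP (M m) Y).Nonempty) :
    ∃ D : ι → Set X, (∀ α, D α ⊆ ⋃ m, M m) ∧
      Pairwise (Function.onFun Disjoint D) ∧
      ∀ α, (⋃ m, H m) ⊆ closure (D α) := by
  classical
  -- index type of the family
  set σ := μ × ι with hσdef
  have hσ : #σ ≤ aleph 1 := by
    have : #σ = #μ * #ι := by simp [hσdef, Cardinal.mk_prod]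
    rw [this]
    calc #μ * #ι ≤ aleph 1 * aleph 1 := by
          exact mul_le_mul' hμ (le_of_eq hι)
      _ = aleph 1 := Cardinal.mul_eq_self (Cardinal.aleph0_le_aleph 1)
  -- embed σ into the canonical well-order of type ω₁
  set T := (aleph 1).ord.ToType with hTdef
  have hTcard : #T = aleph 1 := by rw [hTdef, mk_toType, Cardinal.card_ord]
  obtain ⟨e⟩ : Nonempty (σ ↪ T) := by
    rw [← Cardinal.le_def, hTcard]; exact hσ
  -- initial segments of T are countable
  have hseg : ∀ t : T, {s : T | s < t}.Countable := by
    intro t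
    rw [countable_iff_lt_aleph_one]
    exact Cardinal.mk_Iio_ord_toType t
  -- the family indexed by σ
  set F' : σ → Set X := fun p => F p.1 p.2 with hF'def
  -- countable parts to remove
  set C : σ → Set X := fun p => ⋃ q ∈ {q : σ | e q < e p}, (F' p ∩ F' q) with hCdef
  have hCcount : ∀ p, (C p).Countable := by
    intro p
    apply Set.Countable.biUnion
    · have : {q : σ | e q < e p}.Countable := by
        have := (hseg (e p)).preimage e.injective
        simpa using this
      exact this
    · intro q hq
      have hne : p ≠ q := by
        rintro rfl
        exact lt_irrefl _ (Set.mem_setOf_eq ▸ hq)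
      have : ((p.1, p.2) : μ × ι) ≠ (q.1, q.2) := by
        simpa using hne
      exact had p.1 p.2 q.1 q.2 this
  -- key disjointness: shrunken sets are pairwise disjoint
  have hkey : ∀ p q : σ, p ≠ q → Disjoint (F' p \ C p) (F' q \ C q) := by
    intro p q hpq
    rcases lt_trichotomy (e p) (e q) with h | h | h
    · rw [Set.disjoint_left]
      rintro x ⟨hxp, -⟩ ⟨hxq, hxq'⟩
      exact hxq' (Set.mem_biUnion h ⟨hxq, hxp⟩)
    · exact absurd (e.injective h) hpq
    · rw [Set.disjoint_left]
      rintro x ⟨hxp, hxp'⟩ ⟨hxq, -⟩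
      exact hxp' (Set.mem_biUnion h ⟨hxp, hxq⟩)
  -- define D
  refine ⟨fun α => ⋃ m, (F m α \ C (m, α)), ?_, ?_, ?_⟩
  · intro α x hx
    obtain ⟨m, hm⟩ := Set.mem_iUnion.mp hx
    exact Set.mem_iUnion.mpr ⟨m, hsub m α hm.1⟩
  · intro α β hαβ
    simp only [Function.onFun]
    rw [Set.disjoint_left]
    rintro x hx hx'
    obtain ⟨m, hm⟩ := Set.mem_iUnion.mp hx
    obtain ⟨n, hn⟩ := Set.mem_iUnion.mp hx'
    have hne : ((m, α) : σ) ≠ (n, β) := by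
      intro h; exact hαβ (congrArg Prod.snd h)
    exact Set.disjoint_left.mp (hkey (m, α) (n, β) hne) hm hn
  · intro α x hx
    obtain ⟨m, hm⟩ := Set.mem_iUnion.mp hx
    rw [← hcap m α] at hm
    obtain ⟨hxM, hxU⟩ := hm
    rw [mem_closure_iff]
    intro U hU hxUmem
    have huncount := hxU U hU hxUmem
    have : ¬ (U ∩ (F m α \ C (m, α)) = ∅) := by
      intro hempty
      apply huncount
      have hsub2 : U ∩ F m α ⊆ (U ∩ (F m α \ C (m, α))) ∪ C (m, α) := by
        rintro y ⟨hyU, hyF⟩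
        by_cases hyC : y ∈ C (m, α)
        · exact Or.inr hyC
        · exact Or.inl ⟨hyU, hyF, hyC⟩
      exact Set.Countable.mono hsub2 (by
        rw [hempty]
        simpa using hCcount (m, α))
    obtain ⟨y, hy⟩ := Set.nonempty_iff_ne_empty.mpr this
    exact ⟨y, hy.1, Set.mem_iUnion.mpr ⟨m, hy.2⟩⟩
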